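/- In the Čech–Stone compactification βω of the discrete natural numbers, no point of the remainder βω \ ω has a countable linked local π-base. Equivalently, πχl(βω) is uncountable. -/

import Mathlib

open Set Topology Cardinal

universe u

/-- A local π-base at `p`: a family of nonempty open sets such that every open
set containing `p` contains a member of the family. -/
def IsLocalPiBase {X : Type u} [TopologicalSpace X] (p : X) (𝓑 : Set (Set X)) : Prop :=
  (∀ b ∈ 𝓑, IsOpen b ∧ b.Nonempty) ∧
  ∀ U : Set X, IsOpen U → p ∈ U → ∃ b ∈ 𝓑, b ⊆ U

/-- A family of sets is centered if it has the finite intersection property. -/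
def Centered {X : Type u} (𝓑 : Set (Set X)) : Prop :=
  ∀ F : Finset (Set X), F.Nonempty → ↑F ⊆ 𝓑 → (⋂₀ (F : Set (Set X))).Nonempty

/-- A family of sets is linked if any two members meet. -/
def Linked {X : Type u} (𝓑 : Set (Set X)) : Prop :=
  ∀ b₁ ∈ 𝓑, ∀ b₂ ∈ 𝓑, (b₁ ∩ b₂).Nonempty

/-- A decreasing local π-base at `p`, given as a ⊆-decreasing sequence of
nonempty open sets. -/
def IsDecreasingLocalPiBase {X : Type u} [TopologicalSpace X] (p : X) (A : ℕ → Set X) : Prop :=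
  (∀ n, IsOpen (A n) ∧ (A n).Nonempty) ∧
  (∀ n, A (n + 1) ⊆ A n) ∧
  ∀ U : Set X, IsOpen U → p ∈ U → ∃ n, A n ⊆ U

/-- A cellular family: pairwise disjoint nonempty open sets. -/
def IsCellular {X : Type u} [TopologicalSpace X] (𝓒 : Set (Set X)) : Prop :=
  (∀ c ∈ 𝓒, IsOpen c ∧ c.Nonempty) ∧ 𝓒.PairwiseDisjoint id

/-- A weak closed pseudobase at `p`: a family of open sets whose closures
intersect exactly in `{p}`. -/
def IsWeakClosedPseudobase {X : Type u} [TopologicalSpace X] (p : X) (𝓑 : Set (Set X)) : Prop :=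
  (∀ b ∈ 𝓑, IsOpen b) ∧ (⋂ b ∈ 𝓑, closure b) = {p}

/-- A neighborhood base at `p` consisting of open sets containing `p`. -/
def IsNhdBase {X : Type u} [TopologicalSpace X] (p : X) (𝓑 : Set (Set X)) : Prop :=
  (∀ b ∈ 𝓑, IsOpen b ∧ p ∈ b) ∧
  ∀ U : Set X, IsOpen U → p ∈ U → ∃ b ∈ 𝓑, b ⊆ U


noncomputable def pickList (A : ℕ → Set ℕ) (hA : ∀ n, (A n).Infinite) : ℕ → List ℕ
  | 0 => []
  | k + 1 =>
    pickList A hA k ++ [((hA k).exists_notMem_finset (pickList A hA k).toFinset).choose]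

noncomputable def pickSeq (A : ℕ → Set ℕ) (hA : ∀ n, (A n).Infinite) (k : ℕ) : ℕ :=
  ((hA k).exists_notMem_finset (pickList A hA k).toFinset).choose

lemma pickSeq_spec (A : ℕ → Set ℕ) (hA : ∀ n, (A n).Infinite) (k : ℕ) :
    pickSeq A hA k ∈ A k ∧ pickSeq A hA k ∉ (pickList A hA k).toFinset :=
  ((hA k).exists_notMem_finset (pickList A hA k).toFinset).choose_spec

lemma pickSeq_mem_list (A : ℕ → Set ℕ) (hA : ∀ n, (A n).Infinite) {j k : ℕ} (h : j < k) :
    pickSeq A hA j ∈ pickList A hA k := by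
  induction k with
  | zero => omega
  | succ k ih =>
    rw [pickList]
    rcases Nat.lt_succ_iff_lt_or_eq.mp h with h' | rfl
    · exact List.mem_append_left _ (ih h')
    · exact List.mem_append_right _ (List.mem_singleton.mpr rfl)

lemma pickSeq_injective (A : ℕ → Set ℕ) (hA : ∀ n, (A n).Infinite) :
    Function.Injective (pickSeq A hA) := by
  intro j k h
  by_contra hne
  wlog hlt : j < k generalizing j k
  · exact this h.symm (Ne.symm hne) (by omega)
  exact (pickSeq_spec A hA k).2 (List.mem_toFinset.mpr (h ▸ pickSeq_mem_list A hA hlt))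


/-- no point of the remainder of βω admits a countable linked local
π-base (so πχl(βω) is uncountable). -/
theorem stoneCech_remainder_no_countable_linked_piBase
    (p : StoneCech ℕ) (hp : p ∉ Set.range (stoneCechUnit : ℕ → StoneCech ℕ)) :
    ¬ ∃ 𝓑 : Set (Set (StoneCech ℕ)), 𝓑.Countable ∧ IsLocalPiBase p 𝓑 ∧ Linked 𝓑 := by
  rintro ⟨𝓑, hcnt, hπ, hlink⟩
  classical
  -- every open set containing p contains a member, with p ∈ univ: 𝓑 nonempty
  obtain ⟨B0, hB0, -⟩ := hπ.2 Set.univ isOpen_univ (Set.mem_univ p)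
  obtain ⟨f, rfl⟩ := hcnt.exists_eq_range ⟨B0, hB0⟩
  -- "membership" key lemma
  have key : ∀ S : Set ℕ, p ∈ closure (stoneCechUnit '' S) →
      ∃ m : ℕ, stoneCechUnit ⁻¹' (f m) ⊆ S := by
    intro S hpS
    have hχ : Continuous (fun n : ℕ => decide (n ∈ S)) := continuous_of_discreteTopology
    set g := stoneCechExtend hχ with hgdef
    have hg : Continuous g := continuous_stoneCechExtend hχ
    have hext : ∀ n : ℕ, g (stoneCechUnit n) = decide (n ∈ S) := fun n =>
      congrFun (stoneCechExtend_extends hχ) n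
    have hpU : p ∈ g ⁻¹' {true} := by
      refine closure_minimal ?_ ((isClosed_discrete _).preimage hg) hpS
      rintro _ ⟨n, hn, rfl⟩
      simp [hext n, hn]
    obtain ⟨B, ⟨m, rfl⟩, hBU⟩ := hπ.2 _ ((isOpen_discrete _).preimage hg) hpU
    refine ⟨m, fun n hn => ?_⟩
    have h1 : g (stoneCechUnit n) = true := hBU hn
    rw [hext n] at h1
    exact of_decide_eq_true h1
  have memOr : ∀ S : Set ℕ,
      p ∈ closure (stoneCechUnit '' S) ∨ p ∈ closure (stoneCechUnit '' Sᶜ) := by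
    intro S
    have h : closure (stoneCechUnit '' S) ∪ closure (stoneCechUnit '' Sᶜ) = Set.univ := by
      rw [← closure_union, ← image_union, union_compl_self, image_univ,
        (denseRange_stoneCechUnit (α := ℕ)).closure_eq]
    have hm : p ∈ closure (stoneCechUnit '' S) ∪ closure (stoneCechUnit '' Sᶜ) := by
      rw [h]; exact Set.mem_univ p
    exact hm
  have hfin : ∀ S : Set ℕ, S.Finite → p ∉ closure (stoneCechUnit '' S) := by
    intro S hS hmem
    rw [((hS.image _).isClosed).closure_eq] at hmem
    obtain ⟨n, -, rfl⟩ := hmem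
    exact hp ⟨n, rfl⟩
  set A : ℕ → Set ℕ := fun n => stoneCechUnit ⁻¹' (f n) with hAdef
  have hopen : ∀ n, IsOpen (f n) := fun n => (hπ.1 _ ⟨n, rfl⟩).1
  have hAinf : ∀ n, (A n).Infinite := by
    intro n
    by_contra h
    rw [Set.not_infinite] at h
    obtain ⟨m, hm⟩ := key (A n)ᶜ ((memOr (A n)).resolve_left (hfin _ h))
    have hop : IsOpen (f m ∩ f n) := (hopen m).inter (hopen n)
    obtain ⟨k, hk⟩ := denseRange_stoneCechUnit.exists_mem_open hop
      (hlink (f m) ⟨m, rfl⟩ (f n) ⟨n, rfl⟩)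
    exact hm hk.1 hk.2
  set c : ℕ → ℕ := pickSeq (fun k => A (k / 2)) (fun k => hAinf (k / 2)) with hcdef
  have hcinj : Function.Injective c := pickSeq_injective _ _
  have hcmem : ∀ k, c k ∈ A (k / 2) := fun k => (pickSeq_spec _ _ k).1
  set Y : Set ℕ := Set.range (fun n => c (2 * n)) with hYdef
  set Z : Set ℕ := Set.range (fun n => c (2 * n + 1)) with hZdef
  have hY : ∀ n, c (2 * n) ∈ A n := by
    intro n; have := hcmem (2 * n); rwa [Nat.mul_div_cancel_left n (by norm_num)] at this
  have hZ : ∀ n, c (2 * n + 1) ∈ A n := by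
    intro n; have := hcmem (2 * n + 1)
    have h2 : (2 * n + 1) / 2 = n := by omega
    rwa [h2] at this
  have hZY : Z ⊆ Yᶜ := by
    rintro x ⟨a, rfl⟩ ⟨b, hb⟩
    have := hcinj hb
    omega
  have hnotYc : ¬ p ∈ closure (stoneCechUnit '' Yᶜ) := by
    intro hmem
    obtain ⟨m, hm⟩ := key _ hmem
    exact hm (hY m) ⟨m, rfl⟩
  rcases memOr Z with hZmem | hZcmem
  · exact hnotYc (closure_mono (image_mono hZY) hZmem)
  · obtain ⟨m, hm⟩ := key _ hZcmem
    exact hm (hZ m) ⟨m, rfl⟩
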